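/- Let p₁, p₂, q₁, q₂ satisfy condition (★) and let X₁, …, X_n, Y be Banach spaces. Every continuous n-linear map T : X₁ × ⋯ × X_n → Y which is strongly (q₁,p₁)-summing is strongly (q₂,p₂)-summing. -/

import Mathlib

open scoped BigOperators

/-- A continuous `n`-linear map `T : X₁ × ⋯ × X_n → Y` is strongly `(q,p)`-summing if there
is `C ≥ 0` with `(∑ⱼ ‖T(xⱼ¹,…,xⱼⁿ)‖^q)^{1/q} ≤ C (sup_{φ∈B} ∑ⱼ |φ(xⱼ¹,…,xⱼⁿ)|^p)^{1/p}`
for all finite families, where `B` is the closed unit ball of the space of continuous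
`n`-linear scalar forms. -/
def IsStronglySumming {𝕜 : Type*} [RCLike 𝕜] {n : ℕ} {X : Fin n → Type*}
    [∀ i, NormedAddCommGroup (X i)] [∀ i, NormedSpace 𝕜 (X i)]
    {Y : Type*} [NormedAddCommGroup Y] [NormedSpace 𝕜 Y]
    (q p : ℝ) (T : ContinuousMultilinearMap 𝕜 X Y) : Prop :=
  ∃ C : ℝ, 0 ≤ C ∧ ∀ (m : ℕ) (x : Fin m → ∀ i, X i),
    (∑ j, ‖T (x j)‖ ^ q) ^ (1 / q) ≤
      C * (⨆ φ : {φ : ContinuousMultilinearMap 𝕜 X 𝕜 // ‖φ‖ ≤ 1},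
        ∑ j, ‖φ.1 (x j)‖ ^ p) ^ (1 / p)


lemma aux_sum_rpow_le_rpow_sum {m : ℕ} (f : Fin m → ℝ) (hf : ∀ j, 0 ≤ f j) {t : ℝ}
    (ht : 1 ≤ t) : ∑ j, f j ^ t ≤ (∑ j, f j) ^ t := by
  have hS : 0 ≤ ∑ j, f j := Finset.sum_nonneg fun j _ => hf j
  have ht0 : (0:ℝ) < t := lt_of_lt_of_le zero_lt_one ht
  rcases eq_or_lt_of_le hS with hS0 | hSpos
  · have hz : ∀ j, f j = 0 := by
      intro j
      have := (Finset.sum_eq_zero_iff_of_nonneg (fun j _ => hf j)).1 hS0.symm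
      exact this j (Finset.mem_univ j)
    simp only [hz, Real.zero_rpow ht0.ne', Finset.sum_const_zero, le_refl]
  · calc ∑ j, f j ^ t ≤ ∑ j, (∑ k, f k) ^ (t - 1) * f j := by
          refine Finset.sum_le_sum fun j _ => ?_
          rcases eq_or_lt_of_le (hf j) with h0 | hpos
          · rw [← h0, Real.zero_rpow ht0.ne', mul_zero]
          · have h1 : f j ^ t = f j ^ (t - 1) * f j := by
              nth_rewrite 1 [show t = (t-1) + 1 by ring]
              rw [Real.rpow_add hpos, Real.rpow_one]
            rw [h1]
            refine mul_le_mul_of_nonneg_right ?_ (hf j)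
            refine Real.rpow_le_rpow (hf j) ?_ (by linarith)
            exact Finset.single_le_sum (fun k _ => hf k) (Finset.mem_univ j)
    _ = (∑ k, f k) ^ (t - 1) * ∑ j, f j := by rw [← Finset.mul_sum]
    _ = (∑ j, f j) ^ t := by
          nth_rewrite 2 [show (∑ j, f j) = (∑ j, f j) ^ (1:ℝ) by rw [Real.rpow_one]]
          rw [← Real.rpow_add hSpos]
          ring_nf

set_option maxHeartbeats 1000000

/-- If `p₁, p₂, q₁, q₂` satisfy condition (★) and `X₁, …, X_n, Y` are
Banach spaces, every continuous `n`-linear strongly `(q₁,p₁)`-summing map is strongly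
`(q₂,p₂)`-summing. -/
theorem stmt7 {𝕜 : Type*} [RCLike 𝕜] {n : ℕ} {X : Fin n → Type*}
    [∀ i, NormedAddCommGroup (X i)] [∀ i, NormedSpace 𝕜 (X i)]
    [∀ i, CompleteSpace (X i)]
    {Y : Type*} [NormedAddCommGroup Y] [NormedSpace 𝕜 Y] [CompleteSpace Y]
    (p₁ p₂ q₁ q₂ : ℝ)
    (hp₁ : 1 ≤ p₁) (hp₁₂ : p₁ ≤ p₂) (hq₁ : 1 ≤ q₁) (hq₁₂ : q₁ ≤ q₂)
    (hpq₁ : p₁ ≤ q₁) (hpq₂ : p₂ ≤ q₂)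
    (hstar : 1 / p₁ - 1 / q₁ ≤ 1 / p₂ - 1 / q₂)
    (T : ContinuousMultilinearMap 𝕜 X Y)
    (hT : IsStronglySumming q₁ p₁ T) :
    IsStronglySumming q₂ p₂ T := by
  have hp₁0 : (0:ℝ) < p₁ := lt_of_lt_of_le zero_lt_one hp₁
  have hp₂0 : (0:ℝ) < p₂ := hp₁0.trans_le hp₁₂
  have hq₁0 : (0:ℝ) < q₁ := lt_of_lt_of_le zero_lt_one hq₁
  have hq₂0 : (0:ℝ) < q₂ := hq₁0.trans_le hq₁₂
  haveI hne : Nonempty {φ : ContinuousMultilinearMap 𝕜 X 𝕜 // ‖φ‖ ≤ 1} :=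
    ⟨⟨0, by simp⟩⟩
  -- the supremum family is nonneg and bounded above
  have hsupnn : ∀ (p : ℝ) (m : ℕ) (x : Fin m → ∀ i, X i),
      (0:ℝ) ≤ ⨆ φ : {φ : ContinuousMultilinearMap 𝕜 X 𝕜 // ‖φ‖ ≤ 1},
        ∑ j, ‖φ.1 (x j)‖ ^ p := fun p m x =>
    Real.iSup_nonneg fun φ => Finset.sum_nonneg fun j _ =>
      Real.rpow_nonneg (norm_nonneg _) _
  have hbdd : ∀ (p : ℝ) (_ : 0 ≤ p) (m : ℕ) (x : Fin m → ∀ i, X i),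
      BddAbove (Set.range fun φ : {φ : ContinuousMultilinearMap 𝕜 X 𝕜 // ‖φ‖ ≤ 1} =>
        ∑ j, ‖φ.1 (x j)‖ ^ p) := by
    intro p hp m x
    refine ⟨∑ j, (∏ i, ‖x j i‖) ^ p, ?_⟩
    rintro _ ⟨φ, rfl⟩
    refine Finset.sum_le_sum fun j _ => Real.rpow_le_rpow (norm_nonneg _) ?_ hp
    exact (φ.1.le_opNorm _).trans
      (mul_le_of_le_one_left (Finset.prod_nonneg fun i _ => norm_nonneg _) φ.2)
  rcases Nat.eq_zero_or_pos n with hn | hn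
  · -- n = 0 : T is essentially constant
    subst hn
    refine ⟨‖T‖, norm_nonneg _, fun m x => ?_⟩
    set φ₀ : ContinuousMultilinearMap 𝕜 X 𝕜 := ContinuousMultilinearMap.constOfIsEmpty 𝕜 X 1
    have hφ₀ : ‖φ₀‖ ≤ 1 := by
      rw [ContinuousMultilinearMap.norm_constOfIsEmpty]; simp
    have hsup : (m : ℝ) ≤ ⨆ φ : {φ : ContinuousMultilinearMap 𝕜 X 𝕜 // ‖φ‖ ≤ 1},
        ∑ j, ‖φ.1 (x j)‖ ^ p₂ := by
      have := le_ciSup (hbdd p₂ hp₂0.le m x) ⟨φ₀, hφ₀⟩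
      refine le_trans (le_of_eq ?_) this
      simp [φ₀, ContinuousMultilinearMap.constOfIsEmpty_apply]
    rcases Nat.eq_zero_or_pos m with hm | hm
    · subst hm
      simp only [Finset.univ_eq_empty, Finset.sum_empty]
      rw [Real.zero_rpow (by positivity)]
      exact mul_nonneg (norm_nonneg _) (Real.rpow_nonneg (hsupnn p₂ 0 x) _)
    · have hm1 : (1:ℝ) ≤ (m:ℝ) := by exact_mod_cast hm
      calc (∑ j, ‖T (x j)‖ ^ q₂) ^ (1/q₂)
          ≤ ((m:ℝ) * ‖T‖ ^ q₂) ^ (1/q₂) := by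
            refine Real.rpow_le_rpow (Finset.sum_nonneg fun j _ =>
              Real.rpow_nonneg (norm_nonneg _) _) ?_ (by positivity)
            calc ∑ j, ‖T (x j)‖ ^ q₂ ≤ ∑ _j : Fin m, ‖T‖ ^ q₂ := by
                  refine Finset.sum_le_sum fun j _ => Real.rpow_le_rpow (norm_nonneg _)
                    ?_ hq₂0.le
                  have := T.le_opNorm (x j)
                  simpa using this
              _ = (m:ℝ) * ‖T‖ ^ q₂ := by simp [Finset.sum_const, nsmul_eq_mul]
        _ = (m:ℝ) ^ (1/q₂) * ‖T‖ := by
            rw [Real.mul_rpow (by positivity) (by positivity),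
              ← Real.rpow_mul (norm_nonneg _), mul_one_div_cancel hq₂0.ne', Real.rpow_one]
        _ ≤ (m:ℝ) ^ (1/p₂) * ‖T‖ := by
            refine mul_le_mul_of_nonneg_right ?_ (norm_nonneg _)
            exact Real.rpow_le_rpow_of_exponent_le hm1
              (one_div_le_one_div_of_le hp₂0 hpq₂)
        _ ≤ ‖T‖ * (⨆ φ : {φ : ContinuousMultilinearMap 𝕜 X 𝕜 // ‖φ‖ ≤ 1},
              ∑ j, ‖φ.1 (x j)‖ ^ p₂) ^ (1/p₂) := by
            rw [mul_comm]
            refine mul_le_mul_of_nonneg_left ?_ (norm_nonneg _)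
            exact Real.rpow_le_rpow (by positivity) hsup (by positivity)
  · -- n ≥ 1
    rcases eq_or_lt_of_le hq₁₂ with hqq | hqq
    · -- q₁ = q₂ forces p₁ = p₂, and the statement is trivial
      have h12 : 1/p₁ ≤ 1/p₂ := by rw [hqq] at hstar; linarith
      have hpp : p₂ ≤ p₁ := (one_div_le_one_div hp₁0 hp₂0).mp h12
      obtain rfl : p₁ = p₂ := le_antisymm hp₁₂ hpp
      obtain rfl : q₁ = q₂ := hqq
      exact hT
    · -- main case : q₁ < q₂
      obtain ⟨C, hC0, hC⟩ := hT
      refine ⟨C, hC0, fun m x => ?_⟩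
      set S : ℝ := ∑ j, ‖T (x j)‖ ^ q₂ with hSdef
      have hterm : ∀ j, (0:ℝ) ≤ ‖T (x j)‖ ^ q₂ := fun j => Real.rpow_nonneg (norm_nonneg _) _
      have hS0 : 0 ≤ S := Finset.sum_nonneg fun j _ => hterm j
      set Q : ℝ := ⨆ φ : {φ : ContinuousMultilinearMap 𝕜 X 𝕜 // ‖φ‖ ≤ 1},
        ∑ j, ‖φ.1 (x j)‖ ^ p₂ with hQdef
      have hQ0 : 0 ≤ Q := hsupnn p₂ m x
      rcases eq_or_lt_of_le hS0 with hS0' | hSpos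
      · rw [← hS0', Real.zero_rpow (by positivity)]
        exact mul_nonneg hC0 (Real.rpow_nonneg hQ0 _)
      · set a : ℝ := q₂ / q₁ - 1 with ha
        have ha0 : 0 < a := by
          rw [ha, lt_sub_iff_add_lt, zero_add, lt_div_iff₀ hq₁0]; linarith
        set i₀ : Fin n := ⟨0, hn⟩
        set lam : Fin m → ℝ := fun j => ‖T (x j)‖ ^ a with hlam
        have hlam0 : ∀ j, 0 ≤ lam j := fun j => Real.rpow_nonneg (norm_nonneg _) _
        set x' : Fin m → ∀ i, X i :=
          fun j => Function.update (x j) i₀ (((lam j : ℝ) : 𝕜) • x j i₀) with hx'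
        have hTx' : ∀ j, ‖T (x' j)‖ = lam j * ‖T (x j)‖ := by
          intro j
          rw [hx']
          rw [ContinuousMultilinearMap.map_update_smul, Function.update_eq_self, norm_smul,
            RCLike.norm_ofReal, abs_of_nonneg (hlam0 j)]
        have hφx' : ∀ (φ : ContinuousMultilinearMap 𝕜 X 𝕜) (j : Fin m),
            ‖φ (x' j)‖ = lam j * ‖φ (x j)‖ := by
          intro φ j
          rw [hx']
          rw [ContinuousMultilinearMap.map_update_smul, Function.update_eq_self, norm_smul,
            RCLike.norm_ofReal, abs_of_nonneg (hlam0 j)]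
        have haq : a * q₁ + q₁ = q₂ := by rw [ha]; field_simp; ring
        have hsumS : ∑ j, ‖T (x' j)‖ ^ q₁ = S := by
          refine Finset.sum_congr rfl fun j _ => ?_
          have hN : (0:ℝ) ≤ ‖T (x j)‖ := norm_nonneg _
          rw [hTx' j]
          simp only [hlam]
          rw [Real.mul_rpow (Real.rpow_nonneg hN a) hN, ← Real.rpow_mul hN,
            ← Real.rpow_add' hN (by rw [haq]; exact hq₂0.ne'), haq]
        -- the key Hölder-type estimate
        have hkey : ∀ (b : Fin m → ℝ), (∀ j, 0 ≤ b j) →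
            ∑ j, (lam j * b j) ^ p₁ ≤ S ^ (a*p₁/q₂) * (∑ j, b j ^ p₂) ^ (p₁/p₂) := by
          intro b hb
          have hbsum : (0:ℝ) ≤ ∑ j, b j ^ p₂ :=
            Finset.sum_nonneg fun j _ => Real.rpow_nonneg (hb j) _
          have hstep : ∀ j ∈ Finset.univ, (lam j * b j) ^ p₁
              = ‖T (x j)‖ ^ (a*p₁) * b j ^ p₁ := by
            intro j _
            simp only [hlam]
            rw [Real.mul_rpow (Real.rpow_nonneg (norm_nonneg _) a) (hb j),
              ← Real.rpow_mul (norm_nonneg _)]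
          rw [Finset.sum_congr rfl hstep]
          rcases eq_or_lt_of_le hp₁₂ with hpp | hpp
          · -- p₁ = p₂
            subst hpp
            rw [div_self hp₁0.ne', Real.rpow_one]
            calc ∑ j, ‖T (x j)‖ ^ (a*p₁) * b j ^ p₁
                ≤ ∑ j, S ^ (a*p₁/q₂) * b j ^ p₁ := by
                  refine Finset.sum_le_sum fun j _ => ?_
                  refine mul_le_mul_of_nonneg_right ?_ (Real.rpow_nonneg (hb j) _)
                  have h5 : ‖T (x j)‖ ^ q₂ ≤ S :=
                    Finset.single_le_sum (fun k _ => hterm k) (Finset.mem_univ j)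
                  have h6 : ‖T (x j)‖ ^ (a*p₁) = (‖T (x j)‖ ^ q₂) ^ (a*p₁/q₂) := by
                    rw [← Real.rpow_mul (norm_nonneg _)]
                    congr 1
                    field_simp
                  rw [h6]
                  exact Real.rpow_le_rpow (hterm j) h5 (by positivity)
              _ = S ^ (a*p₁/q₂) * ∑ j, b j ^ p₁ := by rw [← Finset.mul_sum]
          · -- p₁ < p₂ : genuine Hölder
            have hd : (0:ℝ) < p₂ - p₁ := sub_pos.2 hpp
            set u : ℝ := p₂ / (p₂ - p₁) with hu
            set v : ℝ := p₂ / p₁ with hv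
            have hu0 : 0 < u := by positivity
            have hconj : Real.HolderConjugate u v := by
              rw [Real.holderConjugate_iff]
              constructor
              · rw [hu, lt_div_iff₀ hd]; linarith
              · rw [hu, hv]
                field_simp
                ring
            have hH := Real.inner_le_Lp_mul_Lq_of_nonneg (s := Finset.univ) hconj
              (f := fun j => ‖T (x j)‖ ^ (a*p₁)) (g := fun j => b j ^ p₁)
              (fun j _ => Real.rpow_nonneg (norm_nonneg _) _)
              (fun j _ => Real.rpow_nonneg (hb j) _)
            refine hH.trans ?_
            have hsecond : (∑ j, (b j ^ p₁) ^ v) ^ (1/v)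
                = (∑ j, b j ^ p₂) ^ (p₁/p₂) := by
              have hBv : ∀ j ∈ Finset.univ, (b j ^ p₁) ^ v = b j ^ p₂ := by
                intro j _
                rw [← Real.rpow_mul (hb j)]
                congr 1
                rw [hv]
                field_simp
              rw [Finset.sum_congr rfl hBv]
              congr 1
              rw [hv, one_div_div]
            -- star condition gives the needed exponent inequality
            have hstar' : (q₁ - p₁) * (p₂ * q₂) ≤ (q₂ - p₂) * (p₁ * q₁) := by
              rw [div_sub_div _ _ hp₁0.ne' hq₁0.ne', div_sub_div _ _ hp₂0.ne' hq₂0.ne',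
                div_le_div_iff₀ (by positivity) (by positivity)] at hstar
              nlinarith [hstar]
            have he : q₂ ≤ a * p₁ * u := by
              have hgoal : (q₂/q₁ - 1) * p₁ * (p₂/(p₂-p₁)) = ((q₂-q₁)*(p₁*p₂))/(q₁*(p₂-p₁)) := by
                field_simp
              rw [ha, hu, hgoal, le_div_iff₀ (mul_pos hq₁0 hd)]
              nlinarith [hstar']
            have hfirst : (∑ j, (‖T (x j)‖ ^ (a*p₁)) ^ u) ^ (1/u) ≤ S ^ (a*p₁/q₂) := by
              have hAe : ∀ j ∈ Finset.univ, (‖T (x j)‖ ^ (a*p₁)) ^ u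
                  = (‖T (x j)‖ ^ q₂) ^ (a*p₁*u/q₂) := by
                intro j _
                rw [← Real.rpow_mul (norm_nonneg _), ← Real.rpow_mul (norm_nonneg _)]
                congr 1
                field_simp
              rw [Finset.sum_congr rfl hAe]
              have ht1 : (1:ℝ) ≤ a*p₁*u/q₂ := (one_le_div hq₂0).2 he
              have hsum_le := aux_sum_rpow_le_rpow_sum (fun j => ‖T (x j)‖ ^ q₂)
                (fun j => hterm j) ht1
              calc (∑ j, (‖T (x j)‖ ^ q₂) ^ (a*p₁*u/q₂)) ^ (1/u)
                  ≤ (S ^ (a*p₁*u/q₂)) ^ (1/u) := by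
                    refine Real.rpow_le_rpow (Finset.sum_nonneg fun j _ =>
                      Real.rpow_nonneg (hterm j) _) ?_ (by positivity)
                    exact hsum_le
                _ = S ^ (a*p₁/q₂) := by
                    rw [← Real.rpow_mul hS0]
                    congr 1
                    field_simp
            calc (∑ j, (‖T (x j)‖ ^ (a*p₁)) ^ u) ^ (1/u) * (∑ j, (b j ^ p₁) ^ v) ^ (1/v)
                ≤ S ^ (a*p₁/q₂) * (∑ j, (b j ^ p₁) ^ v) ^ (1/v) := by
                  refine mul_le_mul_of_nonneg_right hfirst ?_
                  refine Real.rpow_nonneg (Finset.sum_nonneg fun j _ =>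
                    Real.rpow_nonneg (Real.rpow_nonneg (hb j) _) _) _
              _ = S ^ (a*p₁/q₂) * (∑ j, b j ^ p₂) ^ (p₁/p₂) := by rw [hsecond]
        -- bound the supremum appearing for the scaled vectors
        have hsup' : (⨆ φ : {φ : ContinuousMultilinearMap 𝕜 X 𝕜 // ‖φ‖ ≤ 1},
            ∑ j, ‖φ.1 (x' j)‖ ^ p₁) ≤ S ^ (a*p₁/q₂) * Q ^ (p₁/p₂) := by
          refine ciSup_le fun φ => ?_
          calc ∑ j, ‖φ.1 (x' j)‖ ^ p₁
              = ∑ j, (lam j * ‖φ.1 (x j)‖) ^ p₁ := by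
                refine Finset.sum_congr rfl fun j _ => ?_
                rw [hφx' φ.1 j]
            _ ≤ S ^ (a*p₁/q₂) * (∑ j, ‖φ.1 (x j)‖ ^ p₂) ^ (p₁/p₂) :=
                hkey (fun j => ‖φ.1 (x j)‖) (fun j => norm_nonneg _)
            _ ≤ S ^ (a*p₁/q₂) * Q ^ (p₁/p₂) := by
                refine mul_le_mul_of_nonneg_left ?_ (Real.rpow_nonneg hS0 _)
                refine Real.rpow_le_rpow (Finset.sum_nonneg fun j _ =>
                  Real.rpow_nonneg (norm_nonneg _) _) ?_ (by positivity)
                exact le_ciSup (hbdd p₂ hp₂0.le m x) φ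
        have h1 := hC m x'
        rw [hsumS] at h1
        have h2 : S ^ (1/q₁) ≤ C * (S ^ (a/q₂) * Q ^ (1/p₂)) := by
          refine h1.trans ?_
          refine mul_le_mul_of_nonneg_left ?_ hC0
          calc (⨆ φ : {φ : ContinuousMultilinearMap 𝕜 X 𝕜 // ‖φ‖ ≤ 1},
                ∑ j, ‖φ.1 (x' j)‖ ^ p₁) ^ (1/p₁)
              ≤ (S ^ (a*p₁/q₂) * Q ^ (p₁/p₂)) ^ (1/p₁) :=
                Real.rpow_le_rpow (hsupnn p₁ m x') hsup' (by positivity)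
            _ = S ^ (a/q₂) * Q ^ (1/p₂) := by
                have e1 : a * p₁ / q₂ * (1 / p₁) = a / q₂ := by
                  field_simp
                have e2 : p₁ / p₂ * (1 / p₁) = 1 / p₂ := by
                  field_simp
                rw [Real.mul_rpow (Real.rpow_nonneg hS0 _) (Real.rpow_nonneg hQ0 _),
                  ← Real.rpow_mul hS0, ← Real.rpow_mul hQ0, e1, e2]
        have h3 : S ^ (1/q₁) = S ^ (1/q₂) * S ^ (a/q₂) := by
          rw [← Real.rpow_add hSpos]
          congr 1
          rw [ha]
          field_simp
          ring
        rw [h3] at h2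
        have h4 : C * (S ^ (a/q₂) * Q ^ (1/p₂)) = (C * Q ^ (1/p₂)) * S ^ (a/q₂) := by ring
        rw [h4] at h2
        exact le_of_mul_le_mul_right h2 (Real.rpow_pos_of_pos hSpos _)
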